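/- Let d, n ≥ 1, let Σ be a d×d real symmetric positive definite matrix, let R ∈ SO(d), and set R_Σ = Σ^{1/2} R Σ^{-1/2}. Let P_Σ denote the n-fold product of the centered multivariate Gaussian measure on ℝ^d with covariance Σ, and let W : (ℝ^d)^n → Matrix(d,d,ℝ) be W(y₁,…,y_n) = Σᵢ yᵢ yᵢᵀ. Then the pushforward of P_Σ under y ↦ R_Σ · W(y) · R_Σᵀ equals the pushforward of P_Σ under W; i.e., the Wishart distribution W(Σ, n) is invariant under the action X ↦ R_Σ X R_Σᵀ of the group H_Σ. -/

import Mathlib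

open Matrix MeasureTheory

/-- Matrices inherit the product measurable structure of `Fin d → Fin d → ℝ`. -/
instance {d : ℕ} : MeasurableSpace (Matrix (Fin d) (Fin d) ℝ) :=
  inferInstanceAs (MeasurableSpace (Fin d → Fin d → ℝ))

/-- The density of the centered multivariate Gaussian distribution with covariance `S`
with respect to Lebesgue measure on `ℝ^d`. -/
noncomputable def gaussianDensity {d : ℕ} (S : Matrix (Fin d) (Fin d) ℝ) (v : Fin d → ℝ) : ℝ :=
  (2 * Real.pi) ^ (-(d : ℝ) / 2) * S.det ^ (-(1 : ℝ) / 2) *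
    Real.exp (-(1 / 2) * (v ⬝ᵥ S⁻¹ *ᵥ v))

/-- The centered multivariate Gaussian measure on `ℝ^d` with covariance matrix `S`. -/
noncomputable def gaussianMeasure {d : ℕ} (S : Matrix (Fin d) (Fin d) ℝ) :
    Measure (Fin d → ℝ) :=
  volume.withDensity fun v => ENNReal.ofReal (gaussianDensity S v)

/-- The sum of outer products `Σᵢ yᵢ yᵢᵀ` of a family of `n` vectors of `ℝ^d`. -/
noncomputable def wishartSample {d n : ℕ} (y : Fin n → Fin d → ℝ) :
    Matrix (Fin d) (Fin d) ℝ :=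
  ∑ i, Matrix.vecMulVec (y i) (y i)

open scoped Classical in
/-- The positive semidefinite square root of a matrix, extended to a total function
(junk value `0` when the matrix is not positive semidefinite). -/
noncomputable def matSqrt {d : ℕ} (A : Matrix (Fin d) (Fin d) ℝ) : Matrix (Fin d) (Fin d) ℝ :=
  if hA : A.PosSemidef then
    (hA.1.eigenvectorUnitary : Matrix (Fin d) (Fin d) ℝ) *
      diagonal ((↑) ∘ (√·) ∘ hA.1.eigenvalues) *
      (star hA.1.eigenvectorUnitary : Matrix (Fin d) (Fin d) ℝ)
  else 0

open scoped ENNReal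

lemma aux_measurable_mulVec {d : ℕ} (T : Matrix (Fin d) (Fin d) ℝ) :
    Measurable (fun v : Fin d → ℝ => T *ᵥ v) := by
  apply measurable_pi_lambda
  intro i
  simp only [mulVec, dotProduct]
  exact Finset.measurable_sum _ fun j _ => (measurable_pi_apply j).const_mul _

lemma aux_map_withDensity {α β : Type*} [MeasurableSpace α] [MeasurableSpace β] (f : α → β)
    (g : β → ℝ≥0∞) (hf : Measurable f) (hg : Measurable g) (μ : Measure α) :
    Measure.map f (μ.withDensity (g ∘ f)) = (Measure.map f μ).withDensity g := by
  ext s hs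
  rw [withDensity_apply _ hs, Measure.map_apply hf hs, withDensity_apply _ (hf hs),
    setLIntegral_map hs hg hf]
  rfl

lemma aux_conj_vecMulVec {d : ℕ} (T : Matrix (Fin d) (Fin d) ℝ) (a : Fin d → ℝ) :
    T * vecMulVec a a * Tᵀ = vecMulVec (T *ᵥ a) (T *ᵥ a) := by
  ext i j
  simp only [Matrix.mul_apply, vecMulVec_apply, mulVec, dotProduct, transpose_apply,
    Finset.sum_mul, Finset.mul_sum]
  exact Finset.sum_congr rfl fun k _ => Finset.sum_congr rfl fun l _ => by ring

lemma aux_measurable_density {d : ℕ} (S : Matrix (Fin d) (Fin d) ℝ) :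
    Measurable fun v : Fin d → ℝ => ENNReal.ofReal (gaussianDensity S v) := by
  apply ENNReal.measurable_ofReal.comp
  unfold gaussianDensity
  apply Measurable.const_mul
  apply Real.measurable_exp.comp
  apply Measurable.const_mul
  simp only [dotProduct, mulVec]
  exact Finset.measurable_sum _ fun i _ => (measurable_pi_apply i).mul
    (Finset.measurable_sum _ fun j _ => (measurable_pi_apply j).const_mul _)

lemma aux_measurable_wishart {d n : ℕ} : Measurable (fun y : Fin n → Fin d → ℝ => wishartSample y) := by
  apply measurable_pi_lambda
  intro i
  apply measurable_pi_lambda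
  intro j
  simp only [wishartSample, Matrix.sum_apply, vecMulVec_apply]
  exact Finset.measurable_sum _ fun k _ =>
    Measurable.mul (f := fun c : Fin n → Fin d → ℝ => c k i) (g := fun c => c k j)
      ((measurable_pi_apply i).comp (measurable_pi_apply k))
      ((measurable_pi_apply j).comp (measurable_pi_apply k))


/-- the Wishart distribution `W(Σ, n)` is invariant under the action
`X ↦ R_Σ X R_Σᵀ`, where `R_Σ = Σ^{1/2} R Σ^{-1/2}` and `R ∈ SO(d)`. -/
theorem wishart_invariant_H_sigma (d n : ℕ) (hd : 1 ≤ d) (hn : 1 ≤ n)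
    (S R : Matrix (Fin d) (Fin d) ℝ) (hS : S.PosDef)
    (hR : R * Rᵀ = 1) (hdetR : R.det = 1) :
    Measure.map
        (fun y : Fin n → Fin d → ℝ =>
          (matSqrt S * R * (matSqrt S)⁻¹) * wishartSample y * (matSqrt S * R * (matSqrt S)⁻¹)ᵀ)
        (Measure.pi fun _ : Fin n => gaussianMeasure S)
      = Measure.map (fun y : Fin n → Fin d → ℝ => wishartSample y)
        (Measure.pi fun _ : Fin n => gaussianMeasure S) := by
  classical
  set Q : Matrix (Fin d) (Fin d) ℝ := matSqrt S with hQdef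
  have hQ : Q = (hS.posSemidef.1.eigenvectorUnitary : Matrix (Fin d) (Fin d) ℝ) *
      diagonal ((↑) ∘ (√·) ∘ hS.posSemidef.1.eigenvalues) *
      (star hS.posSemidef.1.eigenvectorUnitary : Matrix (Fin d) (Fin d) ℝ) := by
    rw [hQdef, matSqrt, dif_pos hS.posSemidef]
  have hQQ : Q * Q = S := by
    have hU := Unitary.coe_star_mul_self hS.posSemidef.1.eigenvectorUnitary
    have hD : (diagonal ((↑) ∘ (√·) ∘ hS.posSemidef.1.eigenvalues) : Matrix (Fin d) (Fin d) ℝ) *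
        (diagonal ((↑) ∘ (√·) ∘ hS.posSemidef.1.eigenvalues) : Matrix (Fin d) (Fin d) ℝ) =
        diagonal (RCLike.ofReal ∘ hS.posSemidef.1.eigenvalues) := by
      rw [diagonal_mul_diagonal]; congr 1; funext i
      simp [Real.mul_self_sqrt (hS.posSemidef.eigenvalues_nonneg i)]
    conv_rhs => rw [hS.posSemidef.1.spectral_theorem, Unitary.conjStarAlgAut_apply]
    rw [hQ, ← hD]
    simp only [Matrix.mul_assoc]
    rw [← Matrix.mul_assoc (star _) _ (_ * _), hU, Matrix.one_mul]
  have hQt : Qᵀ = Q := by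
    rw [hQ]
    simp [Matrix.transpose_mul, Matrix.mul_assoc, Matrix.star_eq_conjTranspose]
  have hdetS : (0:ℝ) < S.det := hS.det_pos
  have hdetQsq : Q.det * Q.det = S.det := by rw [← det_mul, hQQ]
  have hdetQ : Q.det ≠ 0 := by
    intro h; rw [h, mul_zero] at hdetQsq; exact hdetS.ne' hdetQsq.symm
  set T : Matrix (Fin d) (Fin d) ℝ := Q * R * Q⁻¹ with hTdef
  have hQQi : Q * Q⁻¹ = 1 := mul_nonsing_inv Q (isUnit_iff_ne_zero.mpr hdetQ)
  have hQiQ : Q⁻¹ * Q = 1 := nonsing_inv_mul Q (isUnit_iff_ne_zero.mpr hdetQ)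
  have hRtR : Rᵀ * R = 1 := mul_eq_one_comm.mp hR
  have hdetT : T.det = 1 := by
    have hdetQi : (Q⁻¹).det = Q.det⁻¹ := by
      rw [det_nonsing_inv, Ring.inverse_eq_inv']
    rw [hTdef, det_mul, det_mul, hdetR, hdetQi, mul_one, mul_inv_cancel₀ hdetQ]
  have hTt : Tᵀ = Q⁻¹ * Rᵀ * Q := by
    rw [hTdef, transpose_mul, transpose_mul, transpose_nonsing_inv, hQt, Matrix.mul_assoc]
  have hSi : S⁻¹ = Q⁻¹ * Q⁻¹ := by rw [← hQQ, Matrix.mul_inv_rev]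
  have e1 : ∀ X : Matrix (Fin d) (Fin d) ℝ, Q * (Q⁻¹ * X) = X := fun X => by
    rw [← Matrix.mul_assoc, hQQi, Matrix.one_mul]
  have e2 : ∀ X : Matrix (Fin d) (Fin d) ℝ, Q⁻¹ * (Q * X) = X := fun X => by
    rw [← Matrix.mul_assoc, hQiQ, Matrix.one_mul]
  have key : Tᵀ * S⁻¹ * T = S⁻¹ := by
    rw [hTt, hSi, hTdef]
    simp only [Matrix.mul_assoc]
    rw [e1, e2, ← Matrix.mul_assoc Rᵀ R, hRtR, Matrix.one_mul]
  -- invariance of the gaussian density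
  have hdens : ∀ v : Fin d → ℝ, gaussianDensity S (T *ᵥ v) = gaussianDensity S v := by
    intro v
    have h1 : (T *ᵥ v) ⬝ᵥ S⁻¹ *ᵥ (T *ᵥ v) = v ᵥ* Tᵀ ⬝ᵥ S⁻¹ *ᵥ (T *ᵥ v) := by
      rw [vecMul_transpose]
    have h2 : v ᵥ* Tᵀ ⬝ᵥ S⁻¹ *ᵥ (T *ᵥ v) = v ⬝ᵥ Tᵀ *ᵥ (S⁻¹ *ᵥ (T *ᵥ v)) :=
      (dotProduct_mulVec _ _ _).symm
    have h3 : v ⬝ᵥ Tᵀ *ᵥ (S⁻¹ *ᵥ (T *ᵥ v)) = v ⬝ᵥ (Tᵀ * S⁻¹ * T) *ᵥ v := by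
      rw [mulVec_mulVec, mulVec_mulVec, Matrix.mul_assoc]
    have hquad : (T *ᵥ v) ⬝ᵥ S⁻¹ *ᵥ (T *ᵥ v) = v ⬝ᵥ S⁻¹ *ᵥ v := by
      rw [h1, h2, h3, key]
    unfold gaussianDensity
    rw [hquad]
  have hTmeas : Measurable (fun v : Fin d → ℝ => T *ᵥ v) := aux_measurable_mulVec T
  have hvol : Measure.map (fun v : Fin d → ℝ => T *ᵥ v) volume = volume := by
    have h := Real.map_matrix_volume_pi_eq_smul_volume_pi (M := T) (by rw [hdetT]; norm_num)
    have hfun : ⇑(Matrix.toLin' T) = fun v : Fin d → ℝ => T *ᵥ v := by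
      funext v; rw [Matrix.toLin'_apply]
    rw [hfun, hdetT] at h
    simpa using h
  have hmp : MeasurePreserving (fun v : Fin d → ℝ => T *ᵥ v)
      (gaussianMeasure S) (gaussianMeasure S) := by
    refine ⟨hTmeas, ?_⟩
    have hcomp : (fun v : Fin d → ℝ => ENNReal.ofReal (gaussianDensity S v)) ∘
        (fun v => T *ᵥ v) = fun v => ENNReal.ofReal (gaussianDensity S v) := by
      funext v; simp [hdens v]
    calc Measure.map (fun v => T *ᵥ v) (gaussianMeasure S)
        = Measure.map (fun v => T *ᵥ v)
            (volume.withDensity ((fun v => ENNReal.ofReal (gaussianDensity S v)) ∘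
              (fun v => T *ᵥ v))) := by rw [hcomp]; rfl
      _ = (Measure.map (fun v => T *ᵥ v) volume).withDensity
            (fun v => ENNReal.ofReal (gaussianDensity S v)) :=
          aux_map_withDensity _ _ hTmeas (aux_measurable_density S) _
      _ = gaussianMeasure S := by rw [hvol]; rfl
  haveI : SigmaFinite (gaussianMeasure S) :=
    SigmaFinite.withDensity_ofReal (gaussianDensity S)
  have hpi : MeasurePreserving (fun (y : Fin n → Fin d → ℝ) (i : Fin n) => T *ᵥ y i)
      (Measure.pi fun _ : Fin n => gaussianMeasure S)
      (Measure.pi fun _ : Fin n => gaussianMeasure S) :=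
    measurePreserving_pi _ _ fun _ => hmp
  have hconj : (fun y : Fin n → Fin d → ℝ => T * wishartSample y * Tᵀ) =
      (fun y : Fin n → Fin d → ℝ => wishartSample y) ∘
        (fun (y : Fin n → Fin d → ℝ) (i : Fin n) => T *ᵥ y i) := by
    funext y
    simp only [Function.comp_apply, wishartSample, Finset.mul_sum, Finset.sum_mul]
    exact Finset.sum_congr rfl fun i _ => aux_conj_vecMulVec T (y i)
  rw [hconj, ← Measure.map_map aux_measurable_wishart hpi.measurable, hpi.map_eq]
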